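/- arXiv:2505.22442 — 4 statements merged into one kernel-verified Lean document; each statement's English description precedes it below -/
import Mathlib

section
/- Let γ ∈ [0,1), let r_min ≤ r_max be real numbers, and for each i ∈ ℕ let X_i be a measurable space, P_i and Q_i probability measures on X_i, and r_i : X_i → ℝ a measurable function with r_min ≤ r_i ≤ r_max. Then |∑_{i=0}^∞ γ^i (∫ r_i dP_i − ∫ r_i dQ_i)| ≤ ((r_max − r_min)/(1 − γ)) · ∑_{i=0}^∞ (1 − γ) γ^i · TV(P_i, Q_i), where both series converge absolutely. -/
open MeasureTheory

noncomputable def tvDist {X : Type*} [MeasurableSpace X] (P Q : Measure X) : ℝ :=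
  ⨆ E : {E : Set X // MeasurableSet E}, |(P E.1).toReal - (Q E.1).toReal|

lemma tv_bdd {X : Type*} [MeasurableSpace X] (P Q : Measure X)
    [IsProbabilityMeasure P] [IsProbabilityMeasure Q] :
    BddAbove (Set.range fun E : {E : Set X // MeasurableSet E} =>
      |(P E.1).toReal - (Q E.1).toReal|) := by
  refine ⟨1, fun y hy => ?_⟩
  obtain ⟨E, rfl⟩ := hy
  have h1 : (P E.1).toReal ≤ 1 := by
    simpa using ENNReal.toReal_mono (by simp) (prob_le_one (μ := P) (s := E.1))
  have h2 : (Q E.1).toReal ≤ 1 := by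
    simpa using ENNReal.toReal_mono (by simp) (prob_le_one (μ := Q) (s := E.1))
  have h3 : (0:ℝ) ≤ (P E.1).toReal := ENNReal.toReal_nonneg
  have h4 : (0:ℝ) ≤ (Q E.1).toReal := ENNReal.toReal_nonneg
  rw [abs_le]; constructor <;> linarith

lemma tv_nonneg {X : Type*} [MeasurableSpace X] (P Q : Measure X) : 0 ≤ tvDist P Q := by
  refine Real.iSup_nonneg fun E => abs_nonneg _

lemma tv_le_one {X : Type*} [MeasurableSpace X] (P Q : Measure X)
    [IsProbabilityMeasure P] [IsProbabilityMeasure Q] : tvDist P Q ≤ 1 := by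
  refine ciSup_le fun E => ?_
  have h1 : (P E.1).toReal ≤ 1 := by
    simpa using ENNReal.toReal_mono (by simp) (prob_le_one (μ := P) (s := E.1))
  have h2 : (Q E.1).toReal ≤ 1 := by
    simpa using ENNReal.toReal_mono (by simp) (prob_le_one (μ := Q) (s := E.1))
  have h3 : (0:ℝ) ≤ (P E.1).toReal := ENNReal.toReal_nonneg
  have h4 : (0:ℝ) ≤ (Q E.1).toReal := ENNReal.toReal_nonneg
  rw [abs_le]; constructor <;> linarith

lemma meas_diff_le_tv {X : Type*} [MeasurableSpace X] (P Q : Measure X)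
    [IsProbabilityMeasure P] [IsProbabilityMeasure Q] {E : Set X} (hE : MeasurableSet E) :
    |(P E).toReal - (Q E).toReal| ≤ tvDist P Q :=
  le_ciSup (tv_bdd P Q) ⟨E, hE⟩

lemma key {X : Type*} [MeasurableSpace X] (P Q : Measure X)
    [IsProbabilityMeasure P] [IsProbabilityMeasure Q] {r : X → ℝ} (hm : Measurable r)
    {rmin rmax : ℝ} (hr : rmin ≤ rmax) (hb : ∀ x, rmin ≤ r x ∧ r x ≤ rmax) :
    |(∫ x, r x ∂P) - ∫ x, r x ∂Q| ≤ (rmax - rmin) * tvDist P Q := by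
  set M := rmax - rmin with hM
  set g : X → ℝ := fun x => r x - rmin with hg
  have hC : ∀ x, ‖r x‖ ≤ max |rmin| |rmax| := fun x =>
    abs_le_max_abs_abs (hb x).1 (hb x).2
  have hrint : ∀ (μ : Measure X) [IsProbabilityMeasure μ], Integrable r μ := by
    intro μ _
    exact Integrable.mono' (integrable_const _) hm.aestronglyMeasurable
      (Filter.Eventually.of_forall hC)
  have hgint : ∀ (μ : Measure X) [IsProbabilityMeasure μ], Integrable g μ := by
    intro μ _
    exact (hrint μ).sub (integrable_const _)
  have hgeq : ∀ (μ : Measure X) [IsProbabilityMeasure μ],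
      ∫ x, g x ∂μ = (∫ x, r x ∂μ) - rmin := by
    intro μ _
    rw [hg]
    rw [integral_sub (hrint μ) (integrable_const _), integral_const]
    simp
  have hlayer : ∀ (μ : Measure X) [IsProbabilityMeasure μ],
      ∫ x, g x ∂μ = ∫ t in Set.Ioc 0 M, ((μ {a | t ≤ g a}).toReal) := by
    intro μ _
    exact (hgint μ).integral_eq_integral_Ioc_meas_le
      (Filter.Eventually.of_forall fun x => by simp [hg, (hb x).1])
      (Filter.Eventually.of_forall fun x => by simp [hg, hM]; linarith [(hb x).2])
  have hEmeas : ∀ t : ℝ, MeasurableSet {a | t ≤ g a} :=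
    fun t => measurableSet_le measurable_const (hm.sub measurable_const)
  have hFint : ∀ (μ : Measure X) [IsProbabilityMeasure μ],
      IntegrableOn (fun t => (μ {a | t ≤ g a}).toReal) (Set.Ioc 0 M) := by
    intro μ _
    refine Integrable.mono' (integrable_const 1) ?_ ?_
    · have hanti : Antitone (fun t : ℝ => μ {a | t ≤ g a}) :=
        fun s t hst => measure_mono fun a ha => le_trans hst ha
      exact (hanti.measurable.ennreal_toReal).aestronglyMeasurable
    · refine Filter.Eventually.of_forall fun t => ?_
      rw [Real.norm_eq_abs, abs_of_nonneg ENNReal.toReal_nonneg]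
      simpa using ENNReal.toReal_mono (by simp) (prob_le_one (μ := μ) (s := {a | t ≤ g a}))
  have hdiff : (∫ x, r x ∂P) - ∫ x, r x ∂Q =
      ∫ t in Set.Ioc 0 M, ((P {a | t ≤ g a}).toReal - (Q {a | t ≤ g a}).toReal) := by
    rw [integral_sub (hFint P) (hFint Q)]
    have := hgeq P; have := hgeq Q
    rw [← hlayer P, ← hlayer Q, hgeq P, hgeq Q]; ring
  rw [hdiff]
  have := norm_integral_le_of_norm_le (μ := volume.restrict (Set.Ioc 0 M))
    (f := fun t => (P {a | t ≤ g a}).toReal - (Q {a | t ≤ g a}).toReal)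
    (g := fun _ => tvDist P Q) (integrable_const _)
    (Filter.Eventually.of_forall fun t => by
      rw [Real.norm_eq_abs]; exact meas_diff_le_tv P Q (hEmeas t))
  rw [Real.norm_eq_abs] at this
  refine this.trans ?_
  rw [integral_const]
  simp only [MeasurableSet.univ, Measure.restrict_apply, Set.univ_inter, Real.volume_Ioc,
    smul_eq_mul, sub_zero]
  rw [Measure.real_def, Measure.restrict_apply MeasurableSet.univ, Set.univ_inter, Real.volume_Ioc,
    sub_zero, ENNReal.toReal_ofReal (by linarith : (0:ℝ) ≤ M)]

/-- For `γ ∈ [0,1)`, bounded measurable rewards `r_i` and probability measures `P_i, Q_i`,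
`|∑ γ^i (∫ r_i dP_i − ∫ r_i dQ_i)| ≤ ((r_max − r_min)/(1 − γ)) ∑ (1−γ) γ^i TV(P_i,Q_i)`,
with both series converging absolutely. -/
theorem tsum_discounted_integral_diff_le {X : ℕ → Type*} [∀ i, MeasurableSpace (X i)]
    (γ : ℝ) (hγ : γ ∈ Set.Ico (0 : ℝ) 1)
    (rmin rmax : ℝ) (hr : rmin ≤ rmax)
    (P Q : ∀ i, Measure (X i))
    [∀ i, IsProbabilityMeasure (P i)] [∀ i, IsProbabilityMeasure (Q i)]
    (r : ∀ i, X i → ℝ) (hmeas : ∀ i, Measurable (r i))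
    (hbound : ∀ i x, rmin ≤ r i x ∧ r i x ≤ rmax) :
    Summable (fun i => |γ ^ i * ((∫ x, r i x ∂(P i)) - ∫ x, r i x ∂(Q i))|) ∧
    Summable (fun i => |(1 - γ) * γ ^ i * tvDist (P i) (Q i)|) ∧
    |∑' i, γ ^ i * ((∫ x, r i x ∂(P i)) - ∫ x, r i x ∂(Q i))| ≤
      ((rmax - rmin) / (1 - γ)) * ∑' i, (1 - γ) * γ ^ i * tvDist (P i) (Q i) := by
  obtain ⟨hγ0, hγ1⟩ := hγ
  have hgeo : Summable fun i : ℕ => γ ^ i :=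
    summable_geometric_of_lt_one hγ0 hγ1
  have hkey : ∀ i, |(∫ x, r i x ∂(P i)) - ∫ x, r i x ∂(Q i)| ≤
      (rmax - rmin) * tvDist (P i) (Q i) :=
    fun i => key (P i) (Q i) (hmeas i) hr (hbound i)
  have hγpow : ∀ i : ℕ, (0:ℝ) ≤ γ ^ i := fun i => pow_nonneg hγ0 i
  have h1γ : (0:ℝ) < 1 - γ := by linarith
  -- pointwise bound for the middle series
  have hmid : ∀ i, |γ ^ i * ((∫ x, r i x ∂(P i)) - ∫ x, r i x ∂(Q i))| ≤
      (rmax - rmin) * (γ ^ i * tvDist (P i) (Q i)) := by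
    intro i
    rw [abs_mul, abs_of_nonneg (hγpow i)]
    calc γ ^ i * |(∫ x, r i x ∂(P i)) - ∫ x, r i x ∂(Q i)|
        ≤ γ ^ i * ((rmax - rmin) * tvDist (P i) (Q i)) :=
          mul_le_mul_of_nonneg_left (hkey i) (hγpow i)
      _ = (rmax - rmin) * (γ ^ i * tvDist (P i) (Q i)) := by ring
  have hsum1 : Summable (fun i => |γ ^ i * ((∫ x, r i x ∂(P i)) - ∫ x, r i x ∂(Q i))|) := by
    refine Summable.of_nonneg_of_le (fun i => abs_nonneg _)
      (fun i => (hmid i).trans ?_) ((hgeo.mul_left (rmax - rmin)).mul_left 1)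
    have := tv_le_one (P i) (Q i)
    have h0 := tv_nonneg (P i) (Q i)
    have : γ ^ i * tvDist (P i) (Q i) ≤ γ ^ i := by
      nlinarith [hγpow i]
    nlinarith [hγpow i, tv_nonneg (P i) (Q i)]
  have hsum3 : Summable (fun i => γ ^ i * tvDist (P i) (Q i)) := by
    refine Summable.of_nonneg_of_le
      (fun i => mul_nonneg (hγpow i) (tv_nonneg _ _)) (fun i => ?_) hgeo
    nlinarith [tv_le_one (P i) (Q i), tv_nonneg (P i) (Q i), hγpow i]
  have heq : ∀ i, |(1 - γ) * γ ^ i * tvDist (P i) (Q i)| =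
      (1 - γ) * (γ ^ i * tvDist (P i) (Q i)) := by
    intro i
    rw [abs_of_nonneg (mul_nonneg (mul_nonneg h1γ.le (hγpow i)) (tv_nonneg _ _))]
    ring
  have hsum2 : Summable (fun i => |(1 - γ) * γ ^ i * tvDist (P i) (Q i)|) :=
    (hsum3.mul_left (1 - γ)).congr fun i => (heq i).symm
  refine ⟨hsum1, hsum2, ?_⟩
  have hsum1' : Summable fun i => ‖γ ^ i * ((∫ x, r i x ∂(P i)) - ∫ x, r i x ∂(Q i))‖ := by
    simp only [Real.norm_eq_abs]; exact hsum1
  have habs := norm_tsum_le_tsum_norm hsum1'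
  simp only [Real.norm_eq_abs] at habs
  have hle : ∑' i, |γ ^ i * ((∫ x, r i x ∂(P i)) - ∫ x, r i x ∂(Q i))| ≤
      ∑' i, (rmax - rmin) * (γ ^ i * tvDist (P i) (Q i)) :=
    Summable.tsum_le_tsum hmid hsum1 (hsum3.mul_left _)
  have hrhs : ((rmax - rmin) / (1 - γ)) * ∑' i, (1 - γ) * γ ^ i * tvDist (P i) (Q i) =
      ∑' i, (rmax - rmin) * (γ ^ i * tvDist (P i) (Q i)) := by
    have : ∑' i, (1 - γ) * γ ^ i * tvDist (P i) (Q i) =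
        (1 - γ) * ∑' i, γ ^ i * tvDist (P i) (Q i) := by
      rw [← tsum_mul_left]
      exact tsum_congr fun i => by ring
    rw [this, tsum_mul_left, ← mul_assoc, div_mul_cancel₀ _ h1γ.ne']
  rw [hrhs]
  exact habs.trans hle
end

section
/- Let P be a probability measure on a measurable space X, let (Θ, Π) be a probability space, and let θ ↦ Q_θ be a measurable family of probability measures on X (a Markov kernel from Θ to X). Let Q̄ := ∫ Q_θ dΠ(θ) be the mixture measure (the bind of Π along the kernel). Then KL(P ‖ Q̄) ≤ ∫ KL(P ‖ Q_θ) dΠ(θ). -/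
open MeasureTheory ProbabilityTheory
open scoped ENNReal Classical

/-- Kullback–Leibler divergence: `∫ log(dP/dQ) dP` when `P ≪ Q` (and the log-likelihood
ratio is integrable), and `+∞` otherwise. -/
noncomputable def klDiv {X : Type*} [MeasurableSpace X] (P Q : Measure X) : ℝ≥0∞ :=
  if P ≪ Q ∧ Integrable (llr P Q) P then ENNReal.ofReal (∫ x, llr P Q x ∂P) else ⊤

section Aux

variable {X : Type*} [MeasurableSpace X] {μ ν ξ : Measure X}

/-- Key change-of-measure bound: `∫ f / (dμ/dν) dμ ≤ ∫ f dν`. -/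
lemma lintegral_div_rnDeriv_le [IsFiniteMeasure μ] [SigmaFinite ν]
    (hμν : μ ≪ ν) {f : X → ℝ≥0∞} (hf : Measurable f) :
    ∫⁻ x, f x / μ.rnDeriv ν x ∂μ ≤ ∫⁻ x, f x ∂ν := by
  rw [← lintegral_rnDeriv_mul hμν (f := fun x => f x / μ.rnDeriv ν x) ((hf.div (μ.measurable_rnDeriv ν)).aemeasurable)]
  exact lintegral_mono fun x => ENNReal.mul_div_le

lemma lintegral_inv_rnDeriv_le [IsProbabilityMeasure μ] [IsProbabilityMeasure ν]
    (hμν : μ ≪ ν) : ∫⁻ x, (μ.rnDeriv ν x)⁻¹ ∂μ ≤ 1 := by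
  have h := lintegral_div_rnDeriv_le (μ := μ) (ν := ν) hμν (f := fun _ => 1) measurable_const
  simpa [one_div] using h

lemma integrable_toReal_inv_rnDeriv [IsProbabilityMeasure μ] [IsProbabilityMeasure ν]
    (hμν : μ ≪ ν) : Integrable (fun x => ((μ.rnDeriv ν x)⁻¹).toReal) μ :=
  integrable_toReal_of_lintegral_ne_top (μ.measurable_rnDeriv ν).inv.aemeasurable
    ((lintegral_inv_rnDeriv_le hμν).trans_lt ENNReal.one_lt_top).ne

lemma llr_lower_bound [IsProbabilityMeasure μ] [SigmaFinite ν] (hμν : μ ≪ ν) :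
    ∀ᵐ x ∂μ, 1 - ((μ.rnDeriv ν x)⁻¹).toReal ≤ llr μ ν x := by
  filter_upwards [Measure.rnDeriv_pos hμν, hμν.ae_le (Measure.rnDeriv_lt_top μ ν)]
    with x hpos hlt
  have ht : 0 < (μ.rnDeriv ν x).toReal := ENNReal.toReal_pos hpos.ne' hlt.ne
  have h1 : Real.log (μ.rnDeriv ν x).toReal⁻¹ ≤ (μ.rnDeriv ν x).toReal⁻¹ - 1 :=
    Real.log_le_sub_one_of_pos (inv_pos.mpr ht)
  rw [Real.log_inv] at h1
  rw [ENNReal.toReal_inv]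
  show 1 - (μ.rnDeriv ν x).toReal⁻¹ ≤ Real.log (μ.rnDeriv ν x).toReal
  linarith

lemma integral_llr_nonneg' [IsProbabilityMeasure μ] [IsProbabilityMeasure ν]
    (hμν : μ ≪ ν) (h_int : Integrable (llr μ ν) μ) : 0 ≤ ∫ x, llr μ ν x ∂μ := by
  have hinv := integrable_toReal_inv_rnDeriv hμν
  have h1 : ∫ x, (1 - ((μ.rnDeriv ν x)⁻¹).toReal) ∂μ ≤ ∫ x, llr μ ν x ∂μ :=
    integral_mono_ae ((integrable_const 1).sub hinv) h_int (llr_lower_bound hμν)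
  have hlt : ∀ᵐ x ∂μ, (μ.rnDeriv ν x)⁻¹ < ⊤ := by
    filter_upwards [Measure.rnDeriv_pos hμν] with x hx
    exact ENNReal.inv_lt_top.mpr hx
  have h2 : ∫ x, ((μ.rnDeriv ν x)⁻¹).toReal ∂μ ≤ 1 := by
    rw [integral_toReal (f := fun x => (μ.rnDeriv ν x)⁻¹) (μ.measurable_rnDeriv ν).inv.aemeasurable hlt]
    simpa using ENNReal.toReal_mono ENNReal.one_ne_top (lintegral_inv_rnDeriv_le hμν)
  rw [integral_sub (integrable_const 1) hinv, integral_const] at h1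
  simp only [probReal_univ, ENNReal.toReal_one, smul_eq_mul, one_mul] at h1
  linarith

/-- The core estimate: if `μ ≪ ν`, `μ ≪ ξ`, `llr μ ξ` is integrable and
`∫ (dμ/dν) dξ` is finite, then `llr μ ν` is integrable and
`∫ llr μ ν dμ + 1 ≤ ∫ llr μ ξ dμ + ∫ (dμ/dν) dξ`. -/
lemma llr_core [IsProbabilityMeasure μ] [IsProbabilityMeasure ν] [IsProbabilityMeasure ξ]
    (hμν : μ ≪ ν) (hμξ : μ ≪ ξ) (hξ_int : Integrable (llr μ ξ) μ)
    (hc : ∫⁻ x, μ.rnDeriv ν x ∂ξ ≠ ⊤) :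
    Integrable (llr μ ν) μ ∧
      ∫ x, llr μ ν x ∂μ + 1 ≤ ∫ x, llr μ ξ x ∂μ + (∫⁻ x, μ.rnDeriv ν x ∂ξ).toReal := by
  set r : X → ℝ≥0∞ := fun x => μ.rnDeriv ν x / μ.rnDeriv ξ x with hr
  have hr_meas : Measurable r := (μ.measurable_rnDeriv ν).div (μ.measurable_rnDeriv ξ)
  have hr_int_le : ∫⁻ x, r x ∂μ ≤ ∫⁻ x, μ.rnDeriv ν x ∂ξ :=
    lintegral_div_rnDeriv_le hμξ (μ.measurable_rnDeriv ν)
  have hr_ne : ∫⁻ x, r x ∂μ ≠ ⊤ := (hr_int_le.trans_lt (lt_top_iff_ne_top.mpr hc)).ne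
  have hr_integrable : Integrable (fun x => (r x).toReal) μ :=
    integrable_toReal_of_lintegral_ne_top hr_meas.aemeasurable hr_ne
  have hinv := integrable_toReal_inv_rnDeriv hμν
  -- pointwise upper bound
  have hub : ∀ᵐ x ∂μ, llr μ ν x ≤ llr μ ξ x + ((r x).toReal - 1) := by
    filter_upwards [Measure.rnDeriv_pos hμν, hμν.ae_le (Measure.rnDeriv_lt_top μ ν),
      Measure.rnDeriv_pos hμξ, hμξ.ae_le (Measure.rnDeriv_lt_top μ ξ)]
      with x h1 h2 h3 h4
    have ht : 0 < (μ.rnDeriv ν x).toReal := ENNReal.toReal_pos h1.ne' h2.ne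
    have hs : 0 < (μ.rnDeriv ξ x).toReal := ENNReal.toReal_pos h3.ne' h4.ne
    have hrx : (r x).toReal = (μ.rnDeriv ν x).toReal / (μ.rnDeriv ξ x).toReal :=
      ENNReal.toReal_div _ _
    have hlog : Real.log ((μ.rnDeriv ν x).toReal / (μ.rnDeriv ξ x).toReal)
        ≤ (μ.rnDeriv ν x).toReal / (μ.rnDeriv ξ x).toReal - 1 :=
      Real.log_le_sub_one_of_pos (div_pos ht hs)
    rw [Real.log_div ht.ne' hs.ne'] at hlog
    show Real.log (μ.rnDeriv ν x).toReal ≤ Real.log (μ.rnDeriv ξ x).toReal + ((r x).toReal - 1)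
    rw [hrx]
    linarith
  have hlb := llr_lower_bound hμν
  have h_int : Integrable (llr μ ν) μ := by
    refine Integrable.mono'
      (g := fun x => |llr μ ξ x| + (r x).toReal + ((μ.rnDeriv ν x)⁻¹).toReal + 1)
      (((hξ_int.abs.add hr_integrable).add hinv).add (integrable_const 1))
      (stronglyMeasurable_llr μ ν).aestronglyMeasurable ?_
    filter_upwards [hub, hlb] with x h1 h2
    rw [Real.norm_eq_abs, abs_le]
    constructor
    · have := ENNReal.toReal_nonneg (a := r x)
      have := abs_nonneg (llr μ ξ x)
      linarith
    · have := le_abs_self (llr μ ξ x)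
      have := ENNReal.toReal_nonneg (a := (μ.rnDeriv ν x)⁻¹)
      linarith
  refine ⟨h_int, ?_⟩
  have h_le : ∫ x, llr μ ν x ∂μ ≤ ∫ x, (llr μ ξ x + ((r x).toReal - 1)) ∂μ :=
    integral_mono_ae h_int (hξ_int.add (hr_integrable.sub (integrable_const 1))) hub
  have hrT : ∫ x, (r x).toReal ∂μ ≤ (∫⁻ x, μ.rnDeriv ν x ∂ξ).toReal := by
    rw [integral_toReal hr_meas.aemeasurable (ae_lt_top hr_meas hr_ne)]
    exact ENNReal.toReal_mono hc hr_int_le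
  have hsub : Integrable (fun x => (r x).toReal - 1) μ := hr_integrable.sub (integrable_const 1)
  rw [integral_add hξ_int hsub, integral_sub hr_integrable (integrable_const 1),
    integral_const] at h_le
  simp only [probReal_univ, ENNReal.toReal_one, smul_eq_mul, one_mul] at h_le
  linarith

/-- The key pointwise (in the mixing parameter) inequality at the level of `klDiv`. -/
lemma klDiv_add_one_le [IsProbabilityMeasure μ] [IsProbabilityMeasure ν] [IsProbabilityMeasure ξ]
    (hμν : μ ≪ ν) :
    klDiv μ ν + 1 ≤ klDiv μ ξ + ∫⁻ x, μ.rnDeriv ν x ∂ξ := by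
  by_cases hξ : μ ≪ ξ ∧ Integrable (llr μ ξ) μ
  swap
  · have h : klDiv μ ξ = ⊤ := by unfold klDiv; rw [if_neg hξ]
    rw [h]
    simp
  by_cases hc : ∫⁻ x, μ.rnDeriv ν x ∂ξ = ⊤
  · rw [hc]
    simp
  obtain ⟨h_int, h_ineq⟩ := llr_core hμν hξ.1 hξ.2 hc
  unfold klDiv
  rw [if_pos ⟨hμν, h_int⟩, if_pos hξ]
  have hA : 0 ≤ ∫ x, llr μ ν x ∂μ := integral_llr_nonneg' hμν h_int
  calc ENNReal.ofReal (∫ x, llr μ ν x ∂μ) + 1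
      = ENNReal.ofReal (∫ x, llr μ ν x ∂μ + 1) := by
        rw [ENNReal.ofReal_add hA zero_le_one, ENNReal.ofReal_one]
    _ ≤ ENNReal.ofReal (∫ x, llr μ ξ x ∂μ + (∫⁻ x, μ.rnDeriv ν x ∂ξ).toReal) :=
        ENNReal.ofReal_le_ofReal h_ineq
    _ ≤ ENNReal.ofReal (∫ x, llr μ ξ x ∂μ) + ENNReal.ofReal (∫⁻ x, μ.rnDeriv ν x ∂ξ).toReal :=
        ENNReal.ofReal_add_le
    _ = _ := by rw [ENNReal.ofReal_toReal hc]

end Aux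

/-- Convexity of the KL divergence in its second argument (Jensen's inequality):
for a mixture `Q̄ = ∫ Q_θ dΠ(θ)` of a measurable family of probability measures,
`KL(P ‖ Q̄) ≤ ∫ KL(P ‖ Q_θ) dΠ(θ)`. -/
theorem klDiv_mixture_le {X Θ : Type*} [MeasurableSpace X] [MeasurableSpace Θ]
    (P : Measure X) [IsProbabilityMeasure P]
    (prior : Measure Θ) [IsProbabilityMeasure prior]
    (Q : Kernel Θ X) [IsMarkovKernel Q] :
    klDiv P (prior.bind fun θ => Q θ) ≤ ∫⁻ θ, klDiv P (Q θ) ∂prior := by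
  by_cases hRHS : ∫⁻ θ, klDiv P (Q θ) ∂prior = ⊤
  · rw [hRHS]; exact le_top
  set ν : Measure X := prior.bind (fun θ => Q θ) with hν
  have hQm : Measurable fun θ => Q θ := Q.measurable
  haveI hνP : IsProbabilityMeasure ν := ⟨by
    rw [hν, Measure.bind_apply MeasurableSet.univ hQm.aemeasurable]
    simp⟩
  -- the mass function c θ = ∫ (dP/dν) dQθ
  set c : Θ → ℝ≥0∞ := fun θ => ∫⁻ x, P.rnDeriv ν x ∂(Q θ) with hcdef
  have hc_meas : Measurable c := Measurable.lintegral_kernel (P.measurable_rnDeriv ν)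
  have hc_le : ∫⁻ θ, c θ ∂prior ≤ 1 := by
    rw [hcdef]
    simp only
    rw [← Measure.lintegral_bind hQm.aemeasurable (P.measurable_rnDeriv ν).aemeasurable]
    calc ∫⁻ x, P.rnDeriv ν x ∂ν ≤ P Set.univ := Measure.lintegral_rnDeriv_le
      _ = 1 := measure_univ
  -- absolute continuity of P with respect to the mixture
  have hPν : P ≪ ν := by
    refine Measure.AbsolutelyContinuous.mk fun s hs hνs => ?_
    by_contra hPs
    have h0 : ∀ᵐ θ ∂prior, Q θ s = 0 := by
      rw [hν, Measure.bind_apply hs hQm.aemeasurable] at hνs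
      exact (lintegral_eq_zero_iff (Q.measurable_coe hs)).mp hνs
    have htop : ∀ᵐ θ ∂prior, klDiv P (Q θ) = ⊤ := by
      filter_upwards [h0] with θ hθ
      unfold klDiv
      rw [if_neg]
      rintro ⟨hac, -⟩
      exact hPs (hac hθ)
    rw [lintegral_congr_ae htop] at hRHS
    simp at hRHS
  -- pointwise bound and integration
  have key : ∀ θ, klDiv P ν + 1 ≤ klDiv P (Q θ) + c θ := fun θ => klDiv_add_one_le hPν
  have h1 : klDiv P ν + 1 ≤ ∫⁻ θ, (klDiv P (Q θ) + c θ) ∂prior := by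
    calc klDiv P ν + 1 = ∫⁻ _, (klDiv P ν + 1) ∂prior := by simp
      _ ≤ _ := lintegral_mono key
  rw [lintegral_add_right' _ hc_meas.aemeasurable] at h1
  have h2 : klDiv P ν + 1 ≤ (∫⁻ θ, klDiv P (Q θ) ∂prior) + 1 :=
    h1.trans (add_le_add_right hc_le _)
  exact (ENNReal.add_le_add_iff_right ENNReal.one_ne_top).mp h2
end

section
/- Let (Θ, μ) be a probability space, and for each N ∈ ℕ let ℓ_N : Θ → ℝ be a bounded measurable function. Let A and B be disjoint measurable subsets of Θ with μ(A) > 0 and μ(B) > 0, let c > 0 and N' ∈ ℕ, and suppose that for all N ≥ N', sup_{θ ∈ A} ℓ_N(θ) + c ≤ inf_{θ ∈ B} ℓ_N(θ). Define the posterior mass ν_N(A) := (∫_A exp(N ℓ_N(θ)) dμ(θ)) / (∫_Θ exp(N ℓ_N(θ)) dμ(θ)). Then for every N ≥ N', ν_N(A) ≤ (μ(A)/μ(B)) · exp(−c N). -/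
open MeasureTheory

/-- Posterior tail contraction: if for all `N ≥ N'` the log-likelihoods on `A` are at least
`c` below those on `B`, then the posterior mass of `A`,
`ν_N(A) = (∫_A e^{N ℓ_N} dμ) / (∫_Θ e^{N ℓ_N} dμ)`, satisfies
`ν_N(A) ≤ (μ(A)/μ(B)) e^{−cN}` for all `N ≥ N'`. -/
theorem posterior_mass_le_exp {Θ : Type*} [MeasurableSpace Θ]
    (μ : Measure Θ) [IsProbabilityMeasure μ]
    (ℓ : ℕ → Θ → ℝ) (hmeas : ∀ N, Measurable (ℓ N))
    (hbdd : ∀ N, ∃ C, ∀ θ, |ℓ N θ| ≤ C)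
    (A B : Set Θ) (hA : MeasurableSet A) (hB : MeasurableSet B) (hAB : Disjoint A B)
    (hμA : 0 < μ A) (hμB : 0 < μ B)
    (c : ℝ) (hc : 0 < c) (N' : ℕ)
    (hsep : ∀ N ≥ N', sSup (ℓ N '' A) + c ≤ sInf (ℓ N '' B)) :
    ∀ N ≥ N',
      (∫ θ in A, Real.exp ((N : ℝ) * ℓ N θ) ∂μ) / (∫ θ, Real.exp ((N : ℝ) * ℓ N θ) ∂μ) ≤
        ((μ A).toReal / (μ B).toReal) * Real.exp (-c * (N : ℝ)) := by
  intro N hN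
  obtain ⟨C, hC⟩ := hbdd N
  set f : Θ → ℝ := fun θ => Real.exp ((N : ℝ) * ℓ N θ) with hf
  have hfmeas : Measurable f := (Real.measurable_exp.comp ((measurable_const.mul (hmeas N))))
  have hfpos : ∀ θ, 0 < f θ := fun θ => Real.exp_pos _
  have hfbd : ∀ θ, ‖f θ‖ ≤ Real.exp ((N : ℝ) * C) := by
    intro θ
    rw [Real.norm_eq_abs, abs_of_pos (hfpos θ)]
    apply Real.exp_le_exp.2
    have := (abs_le.1 (hC θ)).2
    have hCnn : (0:ℝ) ≤ C := le_trans (abs_nonneg _) (hC θ)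
    nlinarith [Nat.cast_nonneg (α := ℝ) N]
  have hint : Integrable f μ := by
    refine ⟨hfmeas.aestronglyMeasurable, ?_⟩
    exact MeasureTheory.HasFiniteIntegral.of_bounded (C := Real.exp ((N : ℝ) * C))
      (Filter.Eventually.of_forall hfbd)
  -- sup / inf bounds
  have hAne : A.Nonempty := nonempty_of_measure_ne_zero hμA.ne'
  have hBne : B.Nonempty := nonempty_of_measure_ne_zero hμB.ne'
  set sA := sSup (ℓ N '' A) with hsA
  have hbddA : BddAbove (ℓ N '' A) := ⟨C, by rintro _ ⟨θ, _, rfl⟩; exact (abs_le.1 (hC θ)).2⟩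
  have hbddB : BddBelow (ℓ N '' B) := ⟨-C, by rintro _ ⟨θ, _, rfl⟩; exact (abs_le.1 (hC θ)).1⟩
  have hsupA : ∀ θ ∈ A, ℓ N θ ≤ sA := fun θ hθ => le_csSup hbddA ⟨θ, hθ, rfl⟩
  have hinfB : ∀ θ ∈ B, sA + c ≤ ℓ N θ := fun θ hθ =>
    le_trans (hsep N hN) (csInf_le hbddB ⟨θ, hθ, rfl⟩)
  -- upper bound for numerator
  have hnum : (∫ θ in A, f θ ∂μ) ≤ (μ A).toReal * Real.exp ((N : ℝ) * sA) := by
    have h1 : (∫ θ in A, f θ ∂μ) ≤ ∫ θ in A, Real.exp ((N : ℝ) * sA) ∂μ := by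
      apply setIntegral_mono_on hint.integrableOn (integrableOn_const (measure_lt_top μ A).ne) hA
      intro θ hθ
      exact Real.exp_le_exp.2 (mul_le_mul_of_nonneg_left (hsupA θ hθ) (Nat.cast_nonneg N))
    simpa [mul_comm, measureReal_def] using h1
  -- lower bound for denominator
  have hden : (μ B).toReal * Real.exp ((N : ℝ) * (sA + c)) ≤ ∫ θ, f θ ∂μ := by
    have h1 : (∫ θ in B, Real.exp ((N : ℝ) * (sA + c)) ∂μ) ≤ ∫ θ in B, f θ ∂μ := by
      apply setIntegral_mono_on (integrableOn_const (measure_lt_top μ B).ne) hint.integrableOn hB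
      intro θ hθ
      exact Real.exp_le_exp.2 (mul_le_mul_of_nonneg_left (hinfB θ hθ) (Nat.cast_nonneg N))
    have h2 : (∫ θ in B, f θ ∂μ) ≤ ∫ θ, f θ ∂μ :=
      setIntegral_le_integral hint (Filter.Eventually.of_forall fun θ => (hfpos θ).le)
    calc (μ B).toReal * Real.exp ((N : ℝ) * (sA + c))
        = ∫ θ in B, Real.exp ((N : ℝ) * (sA + c)) ∂μ := by simp [mul_comm, measureReal_def]
      _ ≤ ∫ θ in B, f θ ∂μ := h1
      _ ≤ ∫ θ, f θ ∂μ := h2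
  have hμBpos : (0:ℝ) < (μ B).toReal := ENNReal.toReal_pos hμB.ne' (measure_ne_top μ B)
  have hμAnn : (0:ℝ) ≤ (μ A).toReal := ENNReal.toReal_nonneg
  have hdenpos : (0:ℝ) < (μ B).toReal * Real.exp ((N : ℝ) * (sA + c)) :=
    mul_pos hμBpos (Real.exp_pos _)
  have key : (∫ θ in A, f θ ∂μ) / (∫ θ, f θ ∂μ) ≤
      ((μ A).toReal * Real.exp ((N : ℝ) * sA)) / ((μ B).toReal * Real.exp ((N : ℝ) * (sA + c))) :=
    div_le_div₀ (by positivity) hnum hdenpos hden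
  refine key.trans (le_of_eq ?_)
  rw [mul_add, Real.exp_add, neg_mul, Real.exp_neg]
  have h1 : Real.exp ((N:ℝ) * sA) ≠ 0 := (Real.exp_pos _).ne'
  have h2 : Real.exp ((N:ℝ) * c) ≠ 0 := (Real.exp_pos _).ne'
  have h3 : (N:ℝ) * c = c * N := mul_comm _ _
  rw [h3]
  field_simp
end

section
/- Let γ ∈ [0,1), let (k_j)_{j∈ℕ} be a sequence of nonnegative real numbers with ∑_{j=0}^∞ γ^j k_j < ∞, and for each i ∈ ℕ let P_i and Q_i be probability measures on a measurable space X_i such that KL(P_{i+1} ‖ Q_{i+1}) ≤ ∑_{j=0}^{i} k_j for every i ∈ ℕ. Then ∑_{i=0}^∞ (1 − γ) γ^i · TV(P_{i+1}, Q_{i+1}) ≤ √(1 − exp(−∑_{j=0}^∞ γ^j k_j)). -/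
open MeasureTheory
open scoped ENNReal Classical

section BH

variable {α : Type*} [MeasurableSpace α]

lemma tv_event_le (P Q : Measure α) [IsProbabilityMeasure P] [IsProbabilityMeasure Q]
    (hac : P ≪ Q) (hint : Integrable (llr P Q) P) {t : ℝ} (ht : ∫ x, llr P Q x ∂P ≤ t)
    {E : Set α} (hE : MeasurableSet E) :
    |(P E).toReal - (Q E).toReal| ≤ Real.sqrt (1 - Real.exp (-t)) := by
  set g : α → ℝ≥0∞ := Q.rnDeriv P with hgdef
  have hgmeas : Measurable g := Measure.measurable_rnDeriv Q P
  have hglt : ∀ᵐ x ∂P, g x < ∞ := Measure.rnDeriv_lt_top Q P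
  set m : ℝ≥0∞ := ∫⁻ x, min (g x) 1 ∂P with hmdef
  set M : ℝ≥0∞ := ∫⁻ x, max (g x) 1 ∂P with hMdef
  have hgint : ∫⁻ x, g x ∂P ≤ 1 := by
    simpa using Measure.lintegral_rnDeriv_le (μ := Q) (ν := P)
  have hm1 : m ≤ 1 := by
    calc m ≤ ∫⁻ _, 1 ∂P := lintegral_mono fun x => min_le_right _ _
    _ = 1 := by simp
  have hmM2 : m + M ≤ 2 := by
    have h1 : m + M = ∫⁻ x, g x + 1 ∂P := by
      rw [← lintegral_add_left (hgmeas.min measurable_const)]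
      exact lintegral_congr fun x => min_add_max _ _
    rw [h1, lintegral_add_right _ measurable_const]
    simp only [lintegral_one, measure_univ, mul_one]
    exact (add_le_add hgint le_rfl).trans_eq one_add_one_eq_two
  have hmtop : m ≠ ∞ := (hm1.trans_lt ENNReal.one_lt_top).ne
  have hMtop : M ≠ ∞ := by
    refine (lt_of_le_of_lt (le_trans le_add_self hmM2) ?_).ne
    exact (by norm_num : (2:ℝ≥0∞) < ⊤)
  -- Hölder / Cauchy-Schwarz
  have hHolder : ∫⁻ x, g x ^ (1/2 : ℝ) ∂P ≤ m ^ (1/2 : ℝ) * M ^ (1/2 : ℝ) := by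
    have hconj : Real.HolderConjugate 2 2 := Real.HolderConjugate.two_two
    have hmmin : Measurable fun x => min (g x) (1:ℝ≥0∞) := hgmeas.min measurable_const
    have hmmax : Measurable fun x => max (g x) (1:ℝ≥0∞) := hgmeas.max measurable_const
    have h := ENNReal.lintegral_mul_le_Lp_mul_Lq P hconj
      (f := fun x => min (g x) (1:ℝ≥0∞) ^ (1/2 : ℝ))
      (g := fun x => max (g x) (1:ℝ≥0∞) ^ (1/2 : ℝ))
      ((hmmin.pow_const (1/2 : ℝ)).aemeasurable)
      ((hmmax.pow_const (1/2 : ℝ)).aemeasurable)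
    simp only [Pi.mul_apply] at h
    have hpt : ∀ x, min (g x) 1 ^ (1/2:ℝ) * max (g x) 1 ^ (1/2:ℝ) = g x ^ (1/2:ℝ) := by
      intro x
      rw [← ENNReal.mul_rpow_of_nonneg _ _ (by norm_num : (0:ℝ) ≤ 1/2), min_mul_max, mul_one]
    have hsq : ∀ y : ℝ≥0∞, (y ^ (1/2:ℝ)) ^ (2:ℝ) = y := by
      intro y
      rw [← ENNReal.rpow_mul]
      norm_num
    rw [lintegral_congr hpt] at h
    simp only [hsq] at h
    convert h using 3 <;> norm_num
  have hHLtop : ∫⁻ x, g x ^ (1/2 : ℝ) ∂P ≠ ∞ := by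
    refine (hHolder.trans_lt (ENNReal.mul_lt_top ?_ ?_)).ne
    · exact ENNReal.rpow_lt_top_of_nonneg (by norm_num) hmtop
    · exact ENNReal.rpow_lt_top_of_nonneg (by norm_num) hMtop
  -- relate exp(-llr/2) to g^(1/2)
  have heqae : (fun x => Real.exp (-llr P Q x / 2)) =ᵐ[P] fun x => (g x ^ (1/2:ℝ)).toReal := by
    filter_upwards [exp_neg_llr hac] with x hx
    have h1 : Real.exp (-llr P Q x / 2) = Real.exp (-llr P Q x) ^ (1/2 : ℝ) := by
      rw [← Real.exp_mul]
      ring_nf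
    rw [h1, hx, ENNReal.toReal_rpow]
  have hint2 : Integrable (fun x => (g x ^ (1/2:ℝ)).toReal) P :=
    integrable_toReal_of_lintegral_ne_top (hgmeas.pow_const _).aemeasurable hHLtop
  have hexpint : Integrable (fun x => Real.exp (-llr P Q x / 2)) P :=
    hint2.congr heqae.symm
  -- Jensen
  set K : ℝ := ∫ x, llr P Q x ∂P with hKdef
  have hJ : Real.exp (-K/2) ≤ ∫ x, Real.exp (-llr P Q x / 2) ∂P := by
    have hfi : Integrable (fun x => -llr P Q x / 2) P := (hint.neg).div_const 2
    have h := convexOn_exp.map_integral_le (f := fun x => -llr P Q x / 2)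
      Real.continuous_exp.continuousOn isClosed_univ
      (Filter.Eventually.of_forall fun x => Set.mem_univ _) hfi ?_
    · have hIf : ∫ x, -llr P Q x / 2 ∂P = -K/2 := by
        rw [integral_div, integral_neg]
      rwa [hIf] at h
    · exact hexpint
  have hIeq : ∫ x, Real.exp (-llr P Q x / 2) ∂P = (∫⁻ x, g x ^ (1/2:ℝ) ∂P).toReal := by
    rw [integral_congr_ae heqae]
    refine integral_toReal (hgmeas.pow_const _).aemeasurable ?_
    filter_upwards [hglt] with x hx
    exact ENNReal.rpow_lt_top_of_nonneg (by norm_num) hx.ne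
  -- chain to reals
  set mr : ℝ := m.toReal with hmrdef
  set Mr : ℝ := M.toReal with hMrdef
  have hmr0 : 0 ≤ mr := ENNReal.toReal_nonneg
  have hmr1 : mr ≤ 1 := by
    simpa [hmrdef] using ENNReal.toReal_mono (by norm_num) hm1
  have hmrMr : mr + Mr ≤ 2 := by
    have := ENNReal.toReal_mono (by norm_num) hmM2
    rwa [ENNReal.toReal_add hmtop hMtop, ENNReal.toReal_ofNat] at this
  have hchain : Real.exp (-t) ≤ mr * Mr := by
    have h1 : Real.exp (-t) ≤ Real.exp (-K) := Real.exp_le_exp.mpr (neg_le_neg ht)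
    have h2 : Real.exp (-K) = Real.exp (-K/2) ^ 2 := by
      rw [sq, ← Real.exp_add]
      congr 1
      ring
    have h3 : Real.exp (-K/2) ^ 2 ≤ ((∫⁻ x, g x ^ (1/2:ℝ) ∂P).toReal) ^ 2 := by
      refine pow_le_pow_left₀ (Real.exp_pos _).le ?_ 2
      rw [← hIeq]; exact hJ
    have h4 : ((∫⁻ x, g x ^ (1/2:ℝ) ∂P).toReal) ^ 2 ≤ ((m ^ (1/2:ℝ) * M ^ (1/2:ℝ)).toReal) ^ 2 := by
      refine pow_le_pow_left₀ ENNReal.toReal_nonneg ?_ 2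
      refine ENNReal.toReal_mono ?_ hHolder
      exact ENNReal.mul_ne_top
        (ENNReal.rpow_lt_top_of_nonneg (by norm_num) hmtop).ne
        (ENNReal.rpow_lt_top_of_nonneg (by norm_num) hMtop).ne
    have h5 : ((m ^ (1/2:ℝ) * M ^ (1/2:ℝ)).toReal) ^ 2 = mr * Mr := by
      rw [ENNReal.toReal_mul, ← ENNReal.toReal_rpow, ← ENNReal.toReal_rpow,
        ← Real.sqrt_eq_rpow, ← Real.sqrt_eq_rpow, mul_pow,
        Real.sq_sqrt ENNReal.toReal_nonneg, Real.sq_sqrt ENNReal.toReal_nonneg]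
    calc Real.exp (-t) ≤ Real.exp (-K) := h1
    _ = Real.exp (-K/2)^2 := h2
    _ ≤ _ := h3
    _ ≤ _ := h4
    _ = mr * Mr := h5
  -- event bounds
  have hminE : ∀ {F : Set α}, MeasurableSet F → m + P F ≤ 1 + Q F := by
    intro F hF
    have hsplit : m = (∫⁻ x in F, min (g x) 1 ∂P) + ∫⁻ x in Fᶜ, min (g x) 1 ∂P :=
      (lintegral_add_compl _ hF).symm
    have h1 : ∫⁻ x in F, min (g x) 1 ∂P ≤ Q F :=
      le_trans (lintegral_mono fun x => min_le_left _ _) (Measure.setLIntegral_rnDeriv_le F)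
    have h2 : ∫⁻ x in Fᶜ, min (g x) 1 ∂P ≤ P Fᶜ := by
      refine le_trans (lintegral_mono fun x => min_le_right _ _) ?_
      simp
    calc m + P F ≤ (Q F + P Fᶜ) + P F := add_le_add_left (hsplit ▸ add_le_add h1 h2) _
    _ = Q F + (P Fᶜ + P F) := by ring
    _ = 1 + Q F := by
      rw [add_comm (P Fᶜ), measure_add_measure_compl hF, measure_univ, add_comm]
  have toRealineq : ∀ {F : Set α}, MeasurableSet F →
      mr + (P F).toReal ≤ 1 + (Q F).toReal := by
    intro F hF
    have h := ENNReal.toReal_mono (by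
      exact ENNReal.add_ne_top.mpr ⟨by norm_num, measure_ne_top _ _⟩) (hminE hF)
    rwa [ENNReal.toReal_add hmtop (measure_ne_top _ _),
      ENNReal.toReal_add (by norm_num) (measure_ne_top _ _), ENNReal.toReal_one] at h
  have hd1 : |(P E).toReal - (Q E).toReal| ≤ 1 - mr := by
    rw [abs_sub_le_iff]
    constructor
    · have h := toRealineq hE
      linarith
    · have h := toRealineq hE.compl
      have hPc : (P Eᶜ).toReal = 1 - (P E).toReal := by
        have := measure_add_measure_compl (μ := P) hE
        rw [measure_univ] at this
        have h' := congrArg ENNReal.toReal this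
        rw [ENNReal.toReal_add (measure_ne_top _ _) (measure_ne_top _ _),
          ENNReal.toReal_one] at h'
        linarith
      have hQc : (Q Eᶜ).toReal = 1 - (Q E).toReal := by
        have := measure_add_measure_compl (μ := Q) hE
        rw [measure_univ] at this
        have h' := congrArg ENNReal.toReal this
        rw [ENNReal.toReal_add (measure_ne_top _ _) (measure_ne_top _ _),
          ENNReal.toReal_one] at h'
        linarith
      rw [hPc, hQc] at h
      linarith
  -- conclude
  set d : ℝ := |(P E).toReal - (Q E).toReal| with hddef
  have hd0 : 0 ≤ d := abs_nonneg _
  have hkey : d ^ 2 ≤ 1 - Real.exp (-t) := by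
    have hdsq : d ^ 2 ≤ (1 - mr)^2 := pow_le_pow_left₀ hd0 hd1 2
    nlinarith [hchain, hmrMr, hmr0, hmr1]
  calc d = Real.sqrt (d ^ 2) := (Real.sqrt_sq hd0).symm
  _ ≤ Real.sqrt (1 - Real.exp (-t)) := Real.sqrt_le_sqrt hkey

end BH

lemma tvDist_nonneg {α : Type*} [MeasurableSpace α] (P Q : Measure α) : 0 ≤ tvDist P Q :=
  Real.iSup_nonneg fun _ => abs_nonneg _

lemma tvDist_le_of_klDiv_le {α : Type*} [MeasurableSpace α] (P Q : Measure α)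
    [IsProbabilityMeasure P] [IsProbabilityMeasure Q] {t : ℝ} (ht0 : 0 ≤ t)
    (h : klDiv P Q ≤ ENNReal.ofReal t) :
    tvDist P Q ≤ Real.sqrt (1 - Real.exp (-t)) := by
  have hcond : P ≪ Q ∧ Integrable (llr P Q) P := by
    by_contra hc
    rw [klDiv, if_neg hc, top_le_iff] at h
    exact ENNReal.ofReal_ne_top h
  obtain ⟨hac, hint⟩ := hcond
  rw [klDiv, if_pos ⟨hac, hint⟩, ENNReal.ofReal_le_ofReal_iff ht0] at h
  have : Nonempty {E : Set α // MeasurableSet E} := ⟨⟨∅, MeasurableSet.empty⟩⟩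
  exact ciSup_le fun E => tv_event_le P Q hac hint h E.2

/-- Bretagnolle–Huber plus geometric rearrangement plus Jensen: if
`KL(P_{i+1} ‖ Q_{i+1}) ≤ ∑_{j=0}^i k_j` with `k_j ≥ 0` and `∑ γ^j k_j < ∞`, then
`∑ (1−γ) γ^i TV(P_{i+1}, Q_{i+1}) ≤ √(1 − exp(−∑ γ^j k_j))`. -/
theorem tsum_tv_le_sqrt_one_sub_exp {X : ℕ → Type*} [∀ i, MeasurableSpace (X i)]
    (γ : ℝ) (hγ : γ ∈ Set.Ico (0 : ℝ) 1)
    (k : ℕ → ℝ) (hk : ∀ j, 0 ≤ k j)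
    (hsum : Summable fun j => γ ^ j * k j)
    (P Q : ∀ i, Measure (X i))
    [∀ i, IsProbabilityMeasure (P i)] [∀ i, IsProbabilityMeasure (Q i)]
    (hKL : ∀ i, klDiv (P (i + 1)) (Q (i + 1)) ≤
      ENNReal.ofReal (∑ j ∈ Finset.range (i + 1), k j)) :
    ∑' i, (1 - γ) * γ ^ i * tvDist (P (i + 1)) (Q (i + 1)) ≤
      Real.sqrt (1 - Real.exp (-∑' j, γ ^ j * k j)) := by
  obtain ⟨hγ0, hγ1⟩ := hγ
  set w : ℕ → ℝ := fun i => (1 - γ) * γ ^ i with hwdef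
  set S : ℕ → ℝ := fun i => ∑ j ∈ Finset.range (i + 1), k j with hSdef
  set T : ℝ := ∑' j, γ ^ j * k j with hTdef
  have hγk0 : ∀ j, 0 ≤ γ ^ j * k j := fun j => mul_nonneg (pow_nonneg hγ0 j) (hk j)
  have hT0 : 0 ≤ T := tsum_nonneg hγk0
  have hS0 : ∀ i, 0 ≤ S i := fun i => Finset.sum_nonneg fun j _ => hk j
  have hSmono : Monotone S := by
    intro i i' hii'
    exact Finset.sum_le_sum_of_subset_of_nonneg
      (Finset.range_subset_range.mpr (by omega)) (fun j _ _ => hk j)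
  have hw0 : ∀ i, 0 ≤ w i := fun i =>
    mul_nonneg (by linarith) (pow_nonneg hγ0 i)
  have hTV : ∀ i, tvDist (P (i + 1)) (Q (i + 1)) ≤ Real.sqrt (1 - Real.exp (-(S i))) :=
    fun i => tvDist_le_of_klDiv_le _ _ (hS0 i) (hKL i)
  have hTVnn : ∀ i, 0 ≤ tvDist (P (i + 1)) (Q (i + 1)) := fun i => tvDist_nonneg _ _
  have hterm_nn : ∀ i, 0 ≤ w i * tvDist (P (i + 1)) (Q (i + 1)) :=
    fun i => mul_nonneg (hw0 i) (hTVnn i)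
  -- summability of weights
  have hγsum : Summable fun i => γ ^ i := summable_geometric_of_lt_one hγ0 hγ1
  have hsumw : Summable w := hγsum.mul_left _
  have htsumw : ∑' i, w i = 1 := by
    rw [hwdef, tsum_mul_left, tsum_geometric_of_lt_one hγ0 hγ1,
      mul_inv_cancel₀ (by linarith : (1:ℝ) - γ ≠ 0)]
  have hpartialw : ∀ N, ∑ i ∈ Finset.range N, w i ≤ 1 :=
    fun N => htsumw ▸ Summable.sum_le_tsum _ (fun i _ => hw0 i) hsumw
  -- partial geometric sums
  have hwpartial : ∀ j, ∑ i ∈ Finset.range j, w i = 1 - γ ^ j := by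
    intro j
    rw [hwdef, ← Finset.mul_sum, geom_sum_eq (by intro h; rw [h] at hγ1; linarith : γ ≠ 1)]
    have hne : γ - 1 ≠ 0 := by
      intro h
      have : γ = 1 := by linarith
      rw [this] at hγ1; linarith
    field_simp
    ring
  -- the indicator-shift sums
  have hindsum : ∀ j : ℕ, Summable (fun i => if j ≤ i then w i else 0) := by
    intro j
    refine Summable.of_nonneg_of_le (fun i => ?_) (fun i => ?_) hsumw
    · split <;> simp [hw0]
    · split <;> simp [hw0]
  have hshift : ∀ j : ℕ, ∑' i, (if j ≤ i then w i else 0) = γ ^ j := by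
    intro j
    have h3 : ∑ i ∈ Finset.range j, (if j ≤ i then w i else 0) = 0 := by
      refine Finset.sum_eq_zero fun i hi => ?_
      rw [if_neg]
      simp only [Finset.mem_range] at hi
      omega
    have h4 : ∀ i : ℕ, (if j ≤ i + j then w (i + j) else 0) = w (i + j) := fun i =>
      if_pos (by omega)
    have h1' : ∑' i, (if j ≤ i then w i else 0) = ∑' i, w (i + j) := by
      rw [← Summable.sum_add_tsum_nat_add (f := fun i => if j ≤ i then w i else 0) j (hindsum j),
        h3, zero_add]
      exact tsum_congr h4
    have h2' : ∑' i, w (i + j) = γ ^ j := by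
      have h2 := Summable.sum_add_tsum_nat_add (f := w) j hsumw
      rw [htsumw, hwpartial j] at h2
      linarith
    rw [h1', h2']
  -- rearrangement identity in ℝ≥0∞
  have hofReal : ∑' i, ENNReal.ofReal (w i * S i) = ENNReal.ofReal T := by
    have lhs_eq : ∀ i, ENNReal.ofReal (w i * S i)
        = ∑ j ∈ Finset.range (i + 1), ENNReal.ofReal (w i * k j) := by
      intro i
      rw [hSdef]
      simp only []
      rw [Finset.mul_sum, ENNReal.ofReal_sum_of_nonneg fun j _ => mul_nonneg (hw0 i) (hk j)]
    calc ∑' i, ENNReal.ofReal (w i * S i)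
        = ∑' i, ∑' j, (if j ≤ i then ENNReal.ofReal (w i * k j) else 0) := by
          refine tsum_congr fun i => ?_
          rw [lhs_eq i, tsum_eq_sum (s := Finset.range (i + 1))
            (fun b hb => if_neg (by simp only [Finset.mem_range] at hb; omega))]
          refine Finset.sum_congr rfl fun j hj => ?_
          rw [if_pos (by simp only [Finset.mem_range] at hj; omega)]
      _ = ∑' j, ∑' i, (if j ≤ i then ENNReal.ofReal (w i * k j) else 0) := ENNReal.tsum_comm
      _ = ∑' j, ENNReal.ofReal (γ ^ j * k j) := by
          refine tsum_congr fun j => ?_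
          have h1 : ∀ i, (if j ≤ i then ENNReal.ofReal (w i * k j) else 0)
              = ENNReal.ofReal ((if j ≤ i then w i else 0) * k j) := by
            intro i; split <;> simp
          have hnn : ∀ i, 0 ≤ (if j ≤ i then w i else 0) * k j := fun i =>
            mul_nonneg (by split <;> simp [hw0]) (hk j)
          have hsm : Summable fun i => (if j ≤ i then w i else 0) * k j :=
            (hindsum j).mul_right _
          rw [tsum_congr h1, ← ENNReal.ofReal_tsum_of_nonneg hnn hsm, tsum_mul_right, hshift j]
      _ = ENNReal.ofReal T := by
          rw [hTdef, ENNReal.ofReal_tsum_of_nonneg hγk0 hsum]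
  have hwS_nn : ∀ i, 0 ≤ w i * S i := fun i => mul_nonneg (hw0 i) (hS0 i)
  have hsS : Summable fun i => w i * S i := by
    have hne : ∑' i, ENNReal.ofReal (w i * S i) ≠ ⊤ := by
      rw [hofReal]; exact ENNReal.ofReal_ne_top
    exact (ENNReal.summable_toReal hne).congr fun i => ENNReal.toReal_ofReal (hwS_nn i)
  have htsS : ∑' i, w i * S i = T := by
    have h := hofReal
    rw [← ENNReal.ofReal_tsum_of_nonneg hwS_nn hsS] at h
    exact (ENNReal.ofReal_eq_ofReal_iff (tsum_nonneg hwS_nn) hT0).mp h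
  -- partial sums of u are nonpositive
  set u : ℕ → ℝ := fun i => w i * S i - w i * T with hudef
  have hu : Summable u := hsS.sub (hsumw.mul_right T)
  have hut : ∑' i, u i = 0 := by
    rw [hudef]
    rw [Summable.tsum_sub hsS (hsumw.mul_right T), htsS, tsum_mul_right, htsumw]
    ring
  have hupart : ∀ N, ∑ i ∈ Finset.range N, u i ≤ 0 := by
    intro N
    by_cases hcase : ∀ i < N, S i ≤ T
    · refine Finset.sum_nonpos fun i hi => ?_
      simp only [Finset.mem_range] at hi
      have := mul_le_mul_of_nonneg_left (hcase i hi) (hw0 i)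
      simp only [hudef]
      linarith
    · push_neg at hcase
      obtain ⟨i0, hi0N, hTlt⟩ := hcase
      have htail : ∀ i, 0 ≤ u (i + N) := by
        intro i
        have hST : T ≤ S (i + N) := le_trans hTlt.le (hSmono (by omega))
        have := mul_le_mul_of_nonneg_left hST (hw0 (i + N))
        simp only [hudef]
        linarith
      have h1 := Summable.sum_add_tsum_nat_add (f := u) N hu
      have h2 : 0 ≤ ∑' i, u (i + N) := tsum_nonneg htail
      rw [hut] at h1
      linarith
  -- main case split on T
  rcases hT0.eq_or_lt with hTz | hTpos
  · -- T = 0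
    have hterm0 : ∀ j, γ ^ j * k j = 0 := by
      intro j
      refine le_antisymm ?_ (hγk0 j)
      have := Summable.le_tsum hsum j (fun m _ => hγk0 m)
      rw [← hTdef, ← hTz] at this
      exact this
    have hzero : ∀ i, (1 - γ) * γ ^ i * tvDist (P (i + 1)) (Q (i + 1)) = 0 := by
      intro i
      rcases hγ0.eq_or_lt with hγz | hγpos
      · cases i with
        | zero =>
          have hk0 : k 0 = 0 := by have := hterm0 0; simpa using this
          have hS00 : S 0 = 0 := by simp [hSdef, hk0]
          have h := hTV 0
          rw [hS00] at h
          simp only [neg_zero, Real.exp_zero, sub_self, Real.sqrt_zero] at h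
          have := le_antisymm h (hTVnn 0)
          simp [this]
        | succ n =>
          rw [← hγz]
          simp
      · have hkz : ∀ j, k j = 0 := by
          intro j
          have := hterm0 j
          have hp : γ ^ j ≠ 0 := (pow_pos hγpos j).ne'
          exact (mul_eq_zero.mp this).resolve_left hp
        have hSz : S i = 0 := by
          simp [hSdef, hkz]
        have h := hTV i
        rw [hSz] at h
        simp only [neg_zero, Real.exp_zero, sub_self, Real.sqrt_zero] at h
        have := le_antisymm h (hTVnn i)
        rw [this, mul_zero]
    rw [tsum_congr hzero, tsum_zero]
    exact Real.sqrt_nonneg _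
  · -- T > 0
    set b : ℝ := Real.sqrt (1 - Real.exp (-T)) with hbdef
    have hexpT1 : Real.exp (-T) < 1 := Real.exp_lt_one_iff.mpr (by linarith)
    have hb0 : 0 < b := Real.sqrt_pos.mpr (by linarith)
    set c : ℝ := Real.exp (-T) / (2 * b) with hcdef
    have hc0 : 0 ≤ c := div_nonneg (Real.exp_pos _).le (by linarith)
    have hc2 : c * (2 * b) = Real.exp (-T) := by
      rw [hcdef]
      field_simp
    have hb2 : b ^ 2 = 1 - Real.exp (-T) := Real.sq_sqrt (by linarith)
    have htan : ∀ s : ℝ, 0 ≤ s → Real.sqrt (1 - Real.exp (-s)) ≤ b + c * (s - T) := by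
      intro s hs
      set a : ℝ := Real.sqrt (1 - Real.exp (-s)) with hadef
      have hexps1 : Real.exp (-s) ≤ 1 := Real.exp_le_one_iff.mpr (by linarith)
      have ha0 : 0 ≤ a := Real.sqrt_nonneg _
      have ha2 : a ^ 2 = 1 - Real.exp (-s) := Real.sq_sqrt (by linarith)
      have h1 : 2 * b * (a - b) ≤ a ^ 2 - b ^ 2 := by nlinarith [sq_nonneg (a - b)]
      have h2 : a ^ 2 - b ^ 2 ≤ Real.exp (-T) * (s - T) := by
        have hmul : Real.exp (-s) = Real.exp (-T) * Real.exp (-(s - T)) := by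
          rw [← Real.exp_add]
          congr 1
          ring
        have h3 : 1 - (s - T) ≤ Real.exp (-(s - T)) := by
          have := Real.add_one_le_exp (-(s - T))
          linarith
        nlinarith [Real.exp_pos (-T)]
      nlinarith [h1, h2, hc2, hb0]
    have hmain : ∀ N, ∑ i ∈ Finset.range N,
        w i * tvDist (P (i + 1)) (Q (i + 1)) ≤ b := by
      intro N
      have step1 : ∑ i ∈ Finset.range N, w i * tvDist (P (i + 1)) (Q (i + 1))
          ≤ ∑ i ∈ Finset.range N, w i * (b + c * (S i - T)) := by
        refine Finset.sum_le_sum fun i _ => ?_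
        exact mul_le_mul_of_nonneg_left ((hTV i).trans (htan (S i) (hS0 i))) (hw0 i)
      have step2 : ∑ i ∈ Finset.range N, w i * (b + c * (S i - T))
          = (∑ i ∈ Finset.range N, w i) * b + c * (∑ i ∈ Finset.range N, u i) := by
        rw [Finset.sum_mul, Finset.mul_sum, ← Finset.sum_add_distrib]
        refine Finset.sum_congr rfl fun i _ => ?_
        simp only [hudef]
        ring
      have step3 : (∑ i ∈ Finset.range N, w i) * b + c * (∑ i ∈ Finset.range N, u i)
          ≤ 1 * b + c * 0 := by
        refine add_le_add (mul_le_mul_of_nonneg_right (hpartialw N) hb0.le)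
          (mul_le_mul_of_nonneg_left (hupart N) hc0)
      calc _ ≤ _ := step1
        _ = _ := step2
        _ ≤ 1 * b + c * 0 := step3
        _ = b := by ring
    exact Real.tsum_le_of_sum_range_le hterm_nn hmain
end
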